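/- Let g > 0, m > 0, e₃ = (0,0,1)ᵀ, and F = (f₁,f₂,f₃)ᵀ ∈ ℝ³ such that F ≠ (0,0,c)ᵀ for every c ≥ g. Set ℑ = m·‖g e₃ − F‖, q_{d0} = √( (m/(2ℑ))·(g − f₃) + 1/2 ) and q_d = ( (m/(2ℑ q_{d0}))·f₂, −(m/(2ℑ q_{d0}))·f₁, 0 )ᵀ. Then ℑ > 0, q_{d0} is well defined and strictly positive, and Q_d = (q_{d0}, q_dᵀ)ᵀ is a unit quaternion: q_{d0}² + ‖q_d‖² = 1. -/

import Mathlib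

open Matrix Filter

noncomputable section

/-- Skew-symmetric matrix of a vector: `skew ω *ᵥ v = ω ×₃ v`. -/
def skew (ω : Fin 3 → ℝ) : Matrix (Fin 3) (Fin 3) ℝ :=
  !![0, -ω 2, ω 1; ω 2, 0, -ω 0; -ω 1, ω 0, 0]

/-- Inverse of `skew` on skew-symmetric matrices. -/
def vex (M : Matrix (Fin 3) (Fin 3) ℝ) : Fin 3 → ℝ :=
  ![M 2 1, M 0 2, M 1 0]

/-- Anti-symmetric projection `P_a(M) = (M - Mᵀ)/2`. -/
def Pa (M : Matrix (Fin 3) (Fin 3) ℝ) : Matrix (Fin 3) (Fin 3) ℝ :=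
  (1 / 2 : ℝ) • (M - Mᵀ)

/-- `Υ(M) = vex (P_a M)`. -/
def Upsilon (M : Matrix (Fin 3) (Fin 3) ℝ) : Fin 3 → ℝ := vex (Pa M)

/-- `R ∈ SO(3)`. -/
def SO3 (R : Matrix (Fin 3) (Fin 3) ℝ) : Prop :=
  R * Rᵀ = 1 ∧ Rᵀ * R = 1 ∧ R.det = 1

/-- `‖R‖_I = Tr(I₃ - R)/4`. -/
def normI (R : Matrix (Fin 3) (Fin 3) ℝ) : ℝ := Matrix.trace (1 - R) / 4

/-- Squared Euclidean norm of a vector of `ℝ³`. -/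
def sqnorm (v : Fin 3 → ℝ) : ℝ := ∑ i, v i ^ 2

/-- The basis vector `e₃ = (0,0,1)ᵀ`. -/
def e3 : Fin 3 → ℝ := ![0, 0, 1]

set_option maxHeartbeats 1000000 in
theorem desired_quaternion_unit (g m : ℝ) (hg : 0 < g) (hm : 0 < m)
    (F : Fin 3 → ℝ) (hF : ∀ c : ℝ, g ≤ c → F ≠ ![0, 0, c])
    (Im qd0 : ℝ) (qd : Fin 3 → ℝ)
    (hIm : Im = m * Real.sqrt (sqnorm (g • e3 - F)))
    (hqd0 : qd0 = Real.sqrt (m / (2 * Im) * (g - F 2) + 1 / 2))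
    (hqd : qd = ![m / (2 * Im * qd0) * F 1, -(m / (2 * Im * qd0) * F 0), 0]) :
    0 < Im ∧ 0 ≤ m / (2 * Im) * (g - F 2) + 1 / 2 ∧ 0 < qd0 ∧
    qd0 ^ 2 + sqnorm qd = 1 := by
  have hs : sqnorm (g • e3 - F) = F 0 ^ 2 + F 1 ^ 2 + (g - F 2) ^ 2 := by
    simp [sqnorm, e3, Fin.sum_univ_three]
  set a := F 0 with ha
  set b := F 1 with hb
  set c := F 2 with hc
  set d := g - c with hd
  set s := a ^ 2 + b ^ 2 + d ^ 2 with hsdef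
  set r := Real.sqrt s with hrdef
  have hspos : 0 < s := by
    rcases lt_or_eq_of_le (by positivity : (0:ℝ) ≤ s) with h | h
    · exact h
    · exfalso
      have ha0 : a = 0 := by nlinarith
      have hb0 : b = 0 := by nlinarith
      have hd0 : d = 0 := by nlinarith
      have hFe : F = ![0, 0, g] := by
        funext i
        fin_cases i
        · simpa using ha0
        · simpa using hb0
        · simp; linarith
      exact hF g le_rfl hFe
  have hr : 0 < r := Real.sqrt_pos.2 hspos
  have hr2 : r ^ 2 = s := Real.sq_sqrt hspos.le
  have hIm' : Im = m * r := by rw [hIm, hs]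
  have hImpos : 0 < Im := by rw [hIm']; positivity
  have hrd : -r < d := by
    by_contra h
    push_neg at h
    have ha0 : a = 0 := by nlinarith
    have hb0 : b = 0 := by nlinarith
    have hgc : g ≤ c := by nlinarith
    have hFe : F = ![0, 0, c] := by
      funext i
      fin_cases i
      · simpa using ha0
      · simpa using hb0
      · simp [hc]
    exact hF c hgc hFe
  have hE : m / (2 * Im) * (g - c) + 1 / 2 = (r + d) / (2 * r) := by
    rw [hIm', ← hd]
    field_simp
    ring
  have hrdpos : 0 < r + d := by linarith
  have hEpos : 0 < m / (2 * Im) * (g - c) + 1 / 2 := by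
    rw [hE]
    exact div_pos hrdpos (by linarith)
  have hq0 : 0 < qd0 := by rw [hqd0]; exact Real.sqrt_pos.2 hEpos
  have hq2 : qd0 ^ 2 = (r + d) / (2 * r) := by
    rw [hqd0, Real.sq_sqrt hEpos.le, hE]
  refine ⟨hImpos, hEpos.le, hq0, ?_⟩
  have hcoef : m / (2 * Im * qd0) = 1 / (2 * r * qd0) := by
    rw [hIm']
    rw [div_eq_div_iff (by positivity) (by positivity)]
    ring
  have hsq : sqnorm qd = (a ^ 2 + b ^ 2) / (2 * r * qd0) ^ 2 := by
    rw [hqd, hcoef]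
    simp only [sqnorm, Fin.sum_univ_three, Matrix.cons_val_zero, Matrix.cons_val_one,
      Matrix.head_cons, Matrix.cons_val_two, Matrix.tail_cons]
    field_simp
    ring
  have hab : a ^ 2 + b ^ 2 = r ^ 2 - d ^ 2 := by
    rw [hr2, hsdef]; ring
  rw [hsq, hab, mul_pow, mul_pow, hq2]
  field_simp
  ring
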